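/- Let N ≥ 1 and 1 ≤ p ≤ N be integers. Define q_{2k+1}(z) := z^{2k+1} and q_{2k}(z) := Σ_{j=0}^{k} ((2k)!!/(2j)!!)·z^{2j}, where (2m)!! := 2^m·m!. Then the holomorphic spectral moment of the Ginibre symplectic ensemble satisfies: (1/π) · ∫_ℂ z^{2p}·(conj(z) − z) · Σ_{k=0}^{N−1} (1/(2·(2k+1)!)) · (q_{2k+1}(z)·q_{2k}(conj(z)) − q_{2k}(z)·q_{2k+1}(conj(z))) · e^{−|z|²} dλ(z) = −2^{p−1}·N!/(N−p)!, where λ is Lebesgue measure on ℂ. -/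

import Mathlib

open Finset MeasureTheory

/-- The even-degree planar skew-orthogonal polynomial for the Gaussian weight:
`q_{2k}(z) = ∑_{j=0}^{k} ((2k)!!/(2j)!!) z^{2j}`, where `(2m)!! = 2^m m!`. -/
noncomputable def qEven (k : ℕ) (z : ℂ) : ℂ :=
  ∑ j ∈ Finset.range (k + 1),
    ((((2 : ℝ) ^ k * (k.factorial : ℝ)) / ((2 : ℝ) ^ j * (j.factorial : ℝ)) : ℝ) : ℂ) * z ^ (2 * j)

/-- The odd-degree planar skew-orthogonal polynomial for the Gaussian weight:
`q_{2k+1}(z) = z^{2k+1}`. -/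
noncomputable def qOdd (k : ℕ) (z : ℂ) : ℂ := z ^ (2 * k + 1)

section GinSEAux

open Real Complex Set


lemma integrable_gauss_half : Integrable (fun z : ℂ => Real.exp (-(1/2) * ‖z‖ ^ 2)) := by
  have h := GaussianFourier.integrable_cexp_neg_mul_sq_norm_add (V := ℂ)
    (b := (1/2 : ℂ)) (by norm_num) 0 0
  have h2 := h.norm
  refine h2.congr ?_
  filter_upwards with z
  simp only [zero_mul, add_zero, Complex.norm_exp]
  congr 1
  rw [show ((-(1/2):ℂ)) = ((-(1/2):ℝ):ℂ) by norm_num, ← Complex.ofReal_pow, ← Complex.ofReal_mul, Complex.ofReal_re]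

lemma integrable_monomial (m n : ℕ) :
    Integrable (fun z : ℂ => z ^ m * ((starRingEnd ℂ) z) ^ n * (Real.exp (-‖z‖ ^ 2) : ℂ)) := by
  have hmeas : AEStronglyMeasurable
      (fun z : ℂ => z ^ m * ((starRingEnd ℂ) z) ^ n * (Real.exp (-‖z‖ ^ 2) : ℂ)) volume := by
    apply Continuous.aestronglyMeasurable
    continuity
  refine Integrable.mono' (g := fun z =>
      ((m+n).factorial * Real.exp (1/2)) * Real.exp (-(1/2) * ‖z‖ ^ 2))
    (integrable_gauss_half.const_mul _) hmeas ?_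
  filter_upwards with z
  have h0 : (0:ℝ) ≤ ‖z‖ := norm_nonneg z
  have hnorm : ‖z ^ m * ((starRingEnd ℂ) z) ^ n * (Real.exp (-‖z‖ ^ 2) : ℂ)‖
      = ‖z‖ ^ (m+n) * Real.exp (-‖z‖ ^ 2) := by
    rw [norm_mul, norm_mul, norm_pow, norm_pow, RCLike.norm_conj, Complex.norm_real,
      Real.norm_of_nonneg (Real.exp_pos _).le, ← pow_add]
  rw [hnorm]
  have h1 : ‖z‖ ^ (m+n) ≤ (m+n).factorial * Real.exp ‖z‖ := by
    have := Real.pow_div_factorial_le_exp ‖z‖ h0 (m+n)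
    rw [div_le_iff₀ (by positivity)] at this
    linarith [this]
  calc ‖z‖ ^ (m+n) * Real.exp (-‖z‖ ^ 2)
      ≤ ((m+n).factorial * Real.exp ‖z‖) * Real.exp (-‖z‖ ^ 2) := by
        apply mul_le_mul_of_nonneg_right h1 (Real.exp_pos _).le
    _ ≤ ((m+n).factorial * Real.exp (1/2)) * Real.exp (-(1/2) * ‖z‖ ^ 2) := by
        rw [mul_assoc, mul_assoc, ← Real.exp_add, ← Real.exp_add]
        apply mul_le_mul_of_nonneg_left _ (by positivity)
        apply Real.exp_le_exp.2
        nlinarith [sq_nonneg (‖z‖ - 1)]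


lemma radial_integral (k : ℕ) :
    ∫ r in Set.Ioi (0:ℝ), r ^ k * Real.exp (-r^2) = (1/2) * Real.Gamma ((k+1)/2) := by
  have h := _root_.integral_rpow_mul_exp_neg_rpow (p := 2) (q := k) two_pos
    (lt_of_lt_of_le (by norm_num) (Nat.cast_nonneg k))
  rw [← h]
  refine setIntegral_congr_fun measurableSet_Ioi (fun x hx => ?_)
  rw [← Real.rpow_natCast x k, ← Real.rpow_natCast x 2]
  norm_num

lemma angular_integral (m n : ℕ) :
    ∫ θ in Set.Ioo (-Real.pi) Real.pi, Complex.exp (((m:ℂ) - n) * θ * Complex.I)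
      = if m = n then (2 * Real.pi : ℂ) else 0 := by
  split_ifs with h
  · subst h
    simp only [sub_self, zero_mul, Complex.exp_zero]
    rw [setIntegral_const, MeasureTheory.measureReal_def, Real.volume_Ioo,
      ENNReal.toReal_ofReal (by linarith [Real.pi_pos] : (0:ℝ) ≤ Real.pi - -Real.pi),
      Complex.real_smul]
    push_cast
    ring
  · set c : ℂ := ((m:ℂ) - n) * Complex.I with hc
    have hmn : (m:ℂ) ≠ (n:ℂ) := by exact_mod_cast h
    have hc0 : c ≠ 0 := by simp [hc, sub_ne_zero.mpr hmn, Complex.I_ne_zero]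
    have heq : ∫ θ in Set.Ioo (-Real.pi) Real.pi, Complex.exp (((m:ℂ) - n) * θ * Complex.I)
        = ∫ θ in (-Real.pi)..Real.pi, Complex.exp (c * θ) := by
      rw [intervalIntegral.integral_of_le (by linarith [Real.pi_pos] : -Real.pi ≤ Real.pi),
        ← MeasureTheory.integral_Ioc_eq_integral_Ioo]
      congr 1
      ext θ
      congr 1
      ring
    rw [heq, integral_exp_mul_complex hc0]
    have h2 : Complex.exp (c * Real.pi) =
        Complex.exp (c * (-Real.pi : ℝ)) *
          Complex.exp ((((m:ℤ) - n : ℤ) : ℂ) * (2 * Real.pi * Complex.I)) := by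
      rw [← Complex.exp_add]
      congr 1
      push_cast
      ring
    rw [h2, Complex.exp_int_mul_two_pi_mul_I, mul_one, sub_self, zero_div]

lemma gauss_moment (m n : ℕ) :
    ∫ z : ℂ, z ^ m * ((starRingEnd ℂ) z) ^ n * (Real.exp (-‖z‖ ^ 2) : ℂ)
      = if m = n then (Real.pi : ℂ) * (m.factorial : ℂ) else 0 := by
  rw [← Complex.integral_comp_polarCoord_symm, _root_.polarCoord_target]
  have step : ∀ p ∈ Set.Ioi (0:ℝ) ×ˢ Set.Ioo (-Real.pi) Real.pi,
      p.1 • ((Complex.polarCoord.symm p) ^ m *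
        ((starRingEnd ℂ) (Complex.polarCoord.symm p)) ^ n *
        (Real.exp (-(‖Complex.polarCoord.symm p‖) ^ 2) : ℂ))
      = (fun r : ℝ => ((r ^ (m+n+1) * Real.exp (-r^2) : ℝ) : ℂ)) p.1 *
        (fun θ : ℝ => Complex.exp (((m:ℂ) - n) * θ * Complex.I)) p.2 := by
    rintro ⟨r, θ⟩ ⟨hr, hθ⟩
    simp only [Set.mem_Ioi] at hr
    have hz : Complex.polarCoord.symm (r, θ) = (r : ℂ) * Complex.exp (θ * Complex.I) := by
      rw [Complex.polarCoord_symm_apply, Complex.exp_mul_I]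
      push_cast
      ring
    have habs : ‖Complex.polarCoord.symm (r, θ)‖ = r := by
      rw [Complex.norm_polarCoord_symm]
      exact abs_of_pos hr
    have hconj : (starRingEnd ℂ) (Complex.polarCoord.symm (r, θ))
        = (r : ℂ) * Complex.exp (-((θ:ℂ) * Complex.I)) := by
      rw [hz, map_mul, Complex.conj_ofReal, ← Complex.exp_conj]
      congr 1
      rw [map_mul, Complex.conj_ofReal, Complex.conj_I, mul_neg]
    rw [hconj, habs, hz]
    have e1 : Complex.exp ((θ:ℂ) * Complex.I) ^ m = Complex.exp ((m:ℂ) * θ * Complex.I) := by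
      rw [← Complex.exp_nat_mul]
      congr 1
      ring
    have e2 : Complex.exp (-((θ:ℂ) * Complex.I)) ^ n
        = Complex.exp (-((n:ℂ) * θ * Complex.I)) := by
      rw [← Complex.exp_nat_mul]
      congr 1
      ring
    have e3 : Complex.exp (((m:ℂ) - n) * θ * Complex.I)
        = Complex.exp ((m:ℂ) * θ * Complex.I) * Complex.exp (-((n:ℂ) * θ * Complex.I)) := by
      rw [← Complex.exp_add]
      congr 1
      ring
    simp only
    rw [Complex.real_smul, mul_pow, mul_pow, e1, e2, e3, Complex.ofReal_mul, Complex.ofReal_pow]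
    ring
  rw [setIntegral_congr_fun (measurableSet_Ioi.prod measurableSet_Ioo) step,
    MeasureTheory.Measure.volume_eq_prod]
  rw [MeasureTheory.setIntegral_prod_mul (μ := volume) (ν := volume)
    (f := fun r : ℝ => ((r ^ (m+n+1) * Real.exp (-r^2) : ℝ) : ℂ))
    (g := fun θ : ℝ => Complex.exp (((m:ℂ) - n) * θ * Complex.I))
    (Set.Ioi 0) (Set.Ioo (-Real.pi) Real.pi)]
  have hreal : (∫ x in Set.Ioi (0:ℝ), ((x ^ (m+n+1) * Real.exp (-x^2) : ℝ) : ℂ))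
      = ((∫ x in Set.Ioi (0:ℝ), x ^ (m+n+1) * Real.exp (-x^2) : ℝ) : ℂ) := integral_ofReal
  rw [hreal, radial_integral (m+n+1), angular_integral m n]
  split_ifs with h
  · subst h
    have h4 : ((m + m + 1 : ℕ) + 1 : ℝ)/2 = (m : ℝ) + 1 := by push_cast; ring
    rw [h4, Real.Gamma_nat_eq_factorial]
    push_cast
    ring
  · rw [mul_zero]

noncomputable def gmG (a b : ℕ) : ℂ := if a = b then (Real.pi : ℂ) * (a.factorial : ℂ) else 0
noncomputable def gmT (p k : ℕ) : ℂ :=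
  if k < p then 0 else (2:ℂ)^(p-1) * (k.factorial : ℂ) / (((k-p).factorial : ℂ))
noncomputable def gmA (k j : ℕ) : ℂ :=
  ((((2 : ℝ) ^ k * (k.factorial : ℝ)) / ((2 : ℝ) ^ j * (j.factorial : ℝ)) : ℝ) : ℂ)
noncomputable def gmC (k : ℕ) : ℂ := 1 / (2 * ((2 * k + 1).factorial : ℂ))

lemma sum_j (p k : ℕ) (hp : 1 ≤ p) :
    ∑ j ∈ Finset.range (k+1), (gmC k * gmA k j) *
      (gmG (2*p+2*k+1) (2*j+1) - gmG (2*p+2*j) (2*k+2)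
        - gmG (2*p+2*k+2) (2*j) + gmG (2*p+2*j+1) (2*k+1))
    = (Real.pi : ℂ) * (gmT p k - gmT p (k+1)) := by
  have hsimp : ∀ j ∈ Finset.range (k+1), (gmC k * gmA k j) *
      (gmG (2*p+2*k+1) (2*j+1) - gmG (2*p+2*j) (2*k+2)
        - gmG (2*p+2*k+2) (2*j) + gmG (2*p+2*j+1) (2*k+1))
      = (gmC k * gmA k j) * gmG (2*p+2*j+1) (2*k+1)
        - (gmC k * gmA k j) * gmG (2*p+2*j) (2*k+2) := by
    intro j hj
    rw [Finset.mem_range] at hj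
    rw [show gmG (2*p+2*k+1) (2*j+1) = 0 by unfold gmG; rw [if_neg (by omega)],
        show gmG (2*p+2*k+2) (2*j) = 0 by unfold gmG; rw [if_neg (by omega)]]
    ring
  rw [Finset.sum_congr rfl hsimp, Finset.sum_sub_distrib]
  -- nonvanishing facts
  have hfac : ∀ n : ℕ, ((n.factorial : ℂ)) ≠ 0 :=
    fun n => Nat.cast_ne_zero.mpr (Nat.factorial_ne_zero n)
  rcases le_or_gt p k with hpk | hpk
  · -- case p ≤ k
    have e4 : ∑ j ∈ Finset.range (k+1), gmC k * gmA k j * gmG (2*p+2*j+1) (2*k+1)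
        = gmC k * gmA k (k-p) * ((Real.pi:ℂ) * ((2*k+1).factorial : ℂ)) := by
      rw [Finset.sum_eq_single (k-p)]
      · unfold gmG; rw [show 2*p+2*(k-p)+1 = 2*k+1 by omega, if_pos rfl]
      · intro j hj hne
        rw [Finset.mem_range] at hj
        unfold gmG; rw [if_neg (by omega), mul_zero]
      · intro h; exact absurd (Finset.mem_range.mpr (by omega)) h
    have e2 : ∑ j ∈ Finset.range (k+1), gmC k * gmA k j * gmG (2*p+2*j) (2*k+2)
        = gmC k * gmA k (k+1-p) * ((Real.pi:ℂ) * ((2*k+2).factorial : ℂ)) := by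
      rw [Finset.sum_eq_single (k+1-p)]
      · unfold gmG
        rw [show 2*p+2*(k+1-p) = 2*k+2 by omega, if_pos rfl]
      · intro j hj hne
        rw [Finset.mem_range] at hj
        unfold gmG; rw [if_neg (by omega), mul_zero]
      · intro h; exact absurd (Finset.mem_range.mpr (by omega)) h
    have h2 : (2:ℂ) ≠ 0 := two_ne_zero
    have hA4 : gmA k (k-p) = (2 * (2:ℂ)^(p-1)) * (k.factorial : ℂ) / ((k-p).factorial : ℂ) := by
      unfold gmA
      push_cast
      rw [show ((2:ℂ)^k) = 2^(k-p) * (2 * 2^(p-1)) by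
            rw [← pow_succ', ← pow_add]; congr 1; omega]
      have hA : ((2:ℂ)^(k-p)) ≠ 0 := pow_ne_zero _ h2
      rw [mul_assoc, mul_div_mul_left _ _ hA]
    have hA2 : gmA k (k+1-p) = ((2:ℂ)^(p-1)) * (k.factorial : ℂ) / (((k+1-p).factorial : ℂ)) := by
      unfold gmA
      push_cast
      rw [show ((2:ℂ)^k) = 2^(k+1-p) * 2^(p-1) by rw [← pow_add]; congr 1; omega]
      have hA : ((2:ℂ)^(k+1-p)) ≠ 0 := pow_ne_zero _ h2
      rw [mul_assoc, mul_div_mul_left _ _ hA]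
    have c4 : gmC k * gmA k (k-p) * ((Real.pi:ℂ) * ((2*k+1).factorial : ℂ))
        = (Real.pi:ℂ) * gmT p k := by
      rw [hA4]
      unfold gmC gmT
      rw [if_neg (by omega)]
      have hH : (((2*k+1).factorial : ℕ) : ℂ) ≠ 0 := hfac _
      have hg : (((k-p).factorial : ℕ) : ℂ) ≠ 0 := hfac _
      field_simp
    have c2 : gmC k * gmA k (k+1-p) * ((Real.pi:ℂ) * ((2*k+2).factorial : ℂ))
        = (Real.pi:ℂ) * gmT p (k+1) := by
      rw [hA2]
      unfold gmC gmT
      rw [if_neg (by omega)]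
      rw [show ((2*k+2).factorial : ℂ) = (2*(k:ℂ)+2) * ((2*k+1).factorial : ℂ) by
            rw [show 2*k+2 = (2*k+1)+1 by ring, Nat.factorial_succ]; push_cast; ring,
          show ((k+1).factorial : ℂ) = ((k:ℂ)+1) * (k.factorial : ℂ) by
            rw [Nat.factorial_succ]; push_cast; ring]
      have hH : (((2*k+1).factorial : ℕ) : ℂ) ≠ 0 := hfac _
      have hu : (((k+1-p).factorial : ℕ) : ℂ) ≠ 0 := hfac _
      field_simp
    rw [e4, e2, c4, c2]
    ring
  · -- case k < p
    have e4 : ∑ j ∈ Finset.range (k+1), gmC k * gmA k j * gmG (2*p+2*j+1) (2*k+1) = 0 := by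
      apply Finset.sum_eq_zero
      intro j hj
      rw [Finset.mem_range] at hj
      unfold gmG; rw [if_neg (by omega), mul_zero]
    rcases eq_or_lt_of_le (Nat.succ_le_of_lt hpk) with hpk1 | hpk1
    · -- p = k+1
      have e2 : ∑ j ∈ Finset.range (k+1), gmC k * gmA k j * gmG (2*p+2*j) (2*k+2)
          = gmC k * gmA k 0 * ((Real.pi:ℂ) * ((2*k+2).factorial : ℂ)) := by
        rw [Finset.sum_eq_single 0]
        · unfold gmG
          rw [show 2*p+2*0 = 2*k+2 by omega, if_pos rfl]
        · intro j hj hne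
          rw [Finset.mem_range] at hj
          unfold gmG; rw [if_neg (by omega), mul_zero]
        · intro h; exact absurd (Finset.mem_range.mpr (by omega)) h
      have h2 : (2:ℂ) ≠ 0 := two_ne_zero
      have hA0 : gmA k 0 = ((2:ℂ)^k) * (k.factorial : ℂ) := by
        unfold gmA
        push_cast
        simp [Nat.factorial_zero]
      have c2 : gmC k * gmA k 0 * ((Real.pi:ℂ) * ((2*k+2).factorial : ℂ))
          = (Real.pi:ℂ) * gmT p (k+1) := by
        rw [hA0]
        unfold gmC gmT
        rw [if_neg (by omega)]
        rw [show ((2*k+2).factorial : ℂ) = (2*(k:ℂ)+2) * ((2*k+1).factorial : ℂ) by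
              rw [show 2*k+2 = (2*k+1)+1 by ring, Nat.factorial_succ]; push_cast; ring,
            show ((k+1).factorial : ℂ) = ((k:ℂ)+1) * (k.factorial : ℂ) by
              rw [Nat.factorial_succ]; push_cast; ring,
            show k+1-p = 0 by omega,
            show ((2:ℂ)^k) = 2^(p-1) by congr 1; omega]
        simp only [Nat.factorial_zero, Nat.cast_one]
        have hH : (((2*k+1).factorial : ℕ) : ℂ) ≠ 0 := hfac _
        field_simp
      rw [e4, e2, c2, show gmT p k = 0 by unfold gmT; rw [if_pos (by omega)]]
      ring
    · -- p > k+1 : everything vanishes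
      have e2 : ∑ j ∈ Finset.range (k+1), gmC k * gmA k j * gmG (2*p+2*j) (2*k+2) = 0 := by
        apply Finset.sum_eq_zero
        intro j hj
        rw [Finset.mem_range] at hj
        unfold gmG; rw [if_neg (by omega), mul_zero]
      rw [e4, e2]
      unfold gmT
      rw [if_pos (by omega), if_pos (by omega)]
      ring


lemma gauss_momentG (m n : ℕ) :
    ∫ z : ℂ, z ^ m * ((starRingEnd ℂ) z) ^ n * (Real.exp (-‖z‖ ^ 2) : ℂ)
      = gmG m n := gauss_moment m n


end GinSEAux

/-- Holomorphic spectral moment of the Ginibre symplectic ensemble: for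
`1 ≤ p ≤ N`,
`(1/π) ∫_ℂ z^{2p} (conj z − z) ∑_{k<N} (1/(2(2k+1)!))
  (q_{2k+1}(z) q_{2k}(conj z) − q_{2k}(z) q_{2k+1}(conj z)) e^{−|z|²} dλ(z) = −2^{p−1} N!/(N−p)!`. -/
theorem ginse_holomorphic_moment (N p : ℕ) (hp1 : 1 ≤ p) (hpN : p ≤ N) :
    (1 / (Real.pi : ℂ)) * ∫ z : ℂ,
        z ^ (2 * p) * ((starRingEnd ℂ) z - z) *
          (∑ k ∈ Finset.range N,
            (1 / (2 * ((2 * k + 1).factorial : ℂ))) *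
              (qOdd k z * qEven k ((starRingEnd ℂ) z) - qEven k z * qOdd k ((starRingEnd ℂ) z))) *
          (Real.exp (-‖z‖ ^ 2) : ℂ)
      = -(2 : ℂ) ^ (p - 1) * ((N.factorial : ℂ) / ((N - p).factorial : ℂ)) := by
  have hπ : (Real.pi : ℂ) ≠ 0 := Complex.ofReal_ne_zero.mpr Real.pi_ne_zero
  set E : ℂ → ℂ := fun z => (Real.exp (-‖z‖ ^ 2) : ℂ) with hE
  have hpt : ∀ z : ℂ,
      z ^ (2 * p) * ((starRingEnd ℂ) z - z) *
          (∑ k ∈ Finset.range N,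
            (1 / (2 * ((2 * k + 1).factorial : ℂ))) *
              (qOdd k z * qEven k ((starRingEnd ℂ) z) - qEven k z * qOdd k ((starRingEnd ℂ) z))) *
          (Real.exp (-‖z‖ ^ 2) : ℂ)
      = ∑ k ∈ Finset.range N, ∑ j ∈ Finset.range (k+1),
          (gmC k * gmA k j) *
            (z ^ (2*p+2*k+1) * ((starRingEnd ℂ) z) ^ (2*j+1) * (Real.exp (-‖z‖ ^ 2) : ℂ)
             - z ^ (2*p+2*j) * ((starRingEnd ℂ) z) ^ (2*k+2) * (Real.exp (-‖z‖ ^ 2) : ℂ)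
             - z ^ (2*p+2*k+2) * ((starRingEnd ℂ) z) ^ (2*j) * (Real.exp (-‖z‖ ^ 2) : ℂ)
             + z ^ (2*p+2*j+1) * ((starRingEnd ℂ) z) ^ (2*k+1) * (Real.exp (-‖z‖ ^ 2) : ℂ)) := by
    intro z
    rw [Finset.mul_sum, Finset.sum_mul]
    refine Finset.sum_congr rfl fun k _ => ?_
    simp only [qOdd, qEven, gmC, gmA]
    rw [Finset.mul_sum, Finset.sum_mul, ← Finset.sum_sub_distrib, Finset.mul_sum,
      Finset.mul_sum, Finset.sum_mul]
    refine Finset.sum_congr rfl fun j _ => ?_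
    ring
  have hint : ∀ (a b : ℕ), Integrable
      (fun z : ℂ => z ^ a * ((starRingEnd ℂ) z) ^ b * (Real.exp (-‖z‖ ^ 2) : ℂ)) :=
    integrable_monomial
  have hint4 : ∀ (k j : ℕ), Integrable (fun z : ℂ =>
      (gmC k * gmA k j) *
            (z ^ (2*p+2*k+1) * ((starRingEnd ℂ) z) ^ (2*j+1) * (Real.exp (-‖z‖ ^ 2) : ℂ)
             - z ^ (2*p+2*j) * ((starRingEnd ℂ) z) ^ (2*k+2) * (Real.exp (-‖z‖ ^ 2) : ℂ)
             - z ^ (2*p+2*k+2) * ((starRingEnd ℂ) z) ^ (2*j) * (Real.exp (-‖z‖ ^ 2) : ℂ)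
             + z ^ (2*p+2*j+1) * ((starRingEnd ℂ) z) ^ (2*k+1) * (Real.exp (-‖z‖ ^ 2) : ℂ))) :=
    fun k j => ((((hint _ _).sub (hint _ _)).sub (hint _ _)).add (hint _ _)).const_mul _
  have hsub : ∀ {f g : ℂ → ℂ}, Integrable f volume → Integrable g volume →
      Integrable (fun z => f z - g z) volume := fun hf hg => hf.sub hg
  have hI : (∫ z : ℂ,
        z ^ (2 * p) * ((starRingEnd ℂ) z - z) *
          (∑ k ∈ Finset.range N,
            (1 / (2 * ((2 * k + 1).factorial : ℂ))) *
              (qOdd k z * qEven k ((starRingEnd ℂ) z) - qEven k z * qOdd k ((starRingEnd ℂ) z))) *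
          (Real.exp (-‖z‖ ^ 2) : ℂ))
      = ∑ k ∈ Finset.range N, ∑ j ∈ Finset.range (k+1),
          (gmC k * gmA k j) *
            (gmG (2*p+2*k+1) (2*j+1) - gmG (2*p+2*j) (2*k+2)
              - gmG (2*p+2*k+2) (2*j) + gmG (2*p+2*j+1) (2*k+1)) := by
    rw [MeasureTheory.integral_congr_ae (Filter.Eventually.of_forall hpt),
      MeasureTheory.integral_finset_sum _
        (fun k _ => MeasureTheory.integrable_finset_sum _ (fun j _ => hint4 k j))]
    refine Finset.sum_congr rfl fun k _ => ?_
    rw [MeasureTheory.integral_finset_sum _ (fun j _ => hint4 k j)]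
    refine Finset.sum_congr rfl fun j _ => ?_
    rw [MeasureTheory.integral_const_mul,
      MeasureTheory.integral_add (hsub (hsub (hint _ _) (hint _ _)) (hint _ _)) (hint _ _),
      MeasureTheory.integral_sub (hsub (hint _ _) (hint _ _)) (hint _ _),
      MeasureTheory.integral_sub (hint _ _) (hint _ _),
      gauss_momentG, gauss_momentG, gauss_momentG, gauss_momentG]
  rw [hI]
  have hsum : ∑ k ∈ Finset.range N, ∑ j ∈ Finset.range (k+1),
          (gmC k * gmA k j) *
            (gmG (2*p+2*k+1) (2*j+1) - gmG (2*p+2*j) (2*k+2)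
              - gmG (2*p+2*k+2) (2*j) + gmG (2*p+2*j+1) (2*k+1))
      = (Real.pi : ℂ) * (gmT p 0 - gmT p N) := by
    rw [Finset.sum_congr rfl (fun k _ => sum_j p k hp1), ← Finset.mul_sum,
      Finset.sum_range_sub' (gmT p)]
  rw [hsum, show gmT p 0 = 0 by unfold gmT; rw [if_pos (by omega)],
    show gmT p N = (2:ℂ)^(p-1) * (N.factorial : ℂ) / ((N - p).factorial : ℂ) by
      unfold gmT; rw [if_neg (by omega)]]
  rw [show ∀ y : ℂ, (1/(Real.pi:ℂ)) * ((Real.pi:ℂ) * y) = y from fun y => by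
    field_simp]
  ring
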